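/- Let a ≥ 1 be an integer and α = [a; a, a, ...] = (a + √(a²+4))/2, with continued fraction convergents pₙ/qₙ satisfying qₙ = pₙ₋₁. Setting xₙ = qₙ₊₁, yₙ = qₙ, zₙ = qₙ₋₁, one has |xₙ² − aα yₙ² − α² zₙ²| ≤ (α + ᾱ)/(qₙ·qₙ₋₁·Bₙ·Bₙ₋₁), where ᾱ = (a − √(a²+4))/2 is the algebraic conjugate of α and Bₙ = |ᾱ − pₙ/qₙ|. -/
import Mathlib


/-- Watson's estimate for the metallic mean `α = (a + √(a²+4))/2`: with convergent
denominators `qₙ` (satisfying `q₀ = 1`, `q₁ = a`, `qₙ₊₂ = a qₙ₊₁ + qₙ` and `pₙ = qₙ₊₁`),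
one has `|q_{n+1}² − aα qₙ² − α² q_{n−1}²| ≤ (α + ᾱ')/(qₙ q_{n−1} Bₙ B_{n−1})`
where `ᾱ' = (a − √(a²+4))/2` and `Bₙ = |ᾱ' − pₙ/qₙ|`. -/
theorem watson_estimate (a : ℕ) (ha : 1 ≤ a) (α ᾱ' : ℝ)
    (hα : α = ((a : ℝ) + Real.sqrt ((a : ℝ) ^ 2 + 4)) / 2)
    (hᾱ' : ᾱ' = ((a : ℝ) - Real.sqrt ((a : ℝ) ^ 2 + 4)) / 2)
    (q : ℕ → ℝ) (hq0 : q 0 = 1) (hq1 : q 1 = (a : ℝ))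
    (hrec : ∀ n : ℕ, q (n + 2) = (a : ℝ) * q (n + 1) + q n)
    (p : ℕ → ℝ) (hp : ∀ n : ℕ, p n = q (n + 1))
    (B : ℕ → ℝ) (hB : ∀ n : ℕ, B n = |ᾱ' - p n / q n|)
    (n : ℕ) (hn : 1 ≤ n) :
    |(q (n + 1)) ^ 2 - (a : ℝ) * α * (q n) ^ 2 - α ^ 2 * (q (n - 1)) ^ 2| ≤
      (α + ᾱ') / (q n * q (n - 1) * B n * B (n - 1)) := by
  obtain ⟨k, rfl⟩ : ∃ k, n = k + 1 := ⟨n - 1, (Nat.succ_pred_eq_of_pos hn).symm⟩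
  simp only [Nat.add_sub_cancel]
  have ha1 : (1:ℝ) ≤ (a:ℝ) := by exact_mod_cast ha
  have hD2 : Real.sqrt ((a:ℝ)^2 + 4) ^ 2 = (a:ℝ)^2 + 4 := Real.sq_sqrt (by positivity)
  have hDpos : 0 < Real.sqrt ((a:ℝ)^2 + 4) := Real.sqrt_pos.mpr (by positivity)
  have hDa : (a:ℝ) < Real.sqrt ((a:ℝ)^2 + 4) := by nlinarith
  have hαpos : 0 < α := by rw [hα]; linarith
  have hsum : α + ᾱ' = (a:ℝ) := by rw [hα, hᾱ']; ring
  have hprod : α * ᾱ' = -1 := by rw [hα, hᾱ']; nlinarith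
  have hneg : ᾱ' < 0 := by nlinarith
  have hα2 : α^2 = (a:ℝ)*α + 1 := by nlinarith
  have hqpos : ∀ m, 0 < q m := by
    have h : ∀ m, 0 < q m ∧ 0 < q (m+1) := by
      intro m
      induction m with
      | zero => exact ⟨by rw [hq0]; norm_num, by rw [hq1]; linarith⟩
      | succ m ih => exact ⟨ih.2, by rw [hrec]; nlinarith [ih.1, ih.2]⟩
    exact fun m => (h m).1
  have key1 : ∀ m, q (m+1) - α * q m = ᾱ'^(m+1) := by
    intro m
    induction m with
    | zero => rw [hq0, hq1, pow_one]; linarith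
    | succ m ih =>
      linear_combination hrec m + ᾱ' * ih - q (m+1) * hsum + q m * hprod
  have key2 : ∀ m, q (m+1) - ᾱ' * q m = α^(m+1) := by
    intro m
    induction m with
    | zero => rw [hq0, hq1, pow_one]; linarith
    | succ m ih =>
      linear_combination hrec m + α * ih - q (m+1) * hsum + q m * hprod
  have hBgen : ∀ m, B m = α^(m+1) / q m := by
    intro m
    have hq := hqpos m
    have hd : ᾱ' - q (m+1) / q m = -(α^(m+1) / q m) := by
      field_simp
      linear_combination - key2 m
    rw [hB, hp, hd, abs_neg, abs_of_pos (by positivity)]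
  have hden : q (k+1) * q k * B (k+1) * B k = α^(2*k+3) := by
    rw [hBgen, hBgen]
    field_simp [(hqpos k).ne', (hqpos (k+1)).ne']
    ring
  have hLHS : q (k+1+1)^2 - (a:ℝ)*α*(q (k+1))^2 - α^2*(q k)^2
      = (a:ℝ) * ᾱ' * (ᾱ'^(k+1))^2 := by
    linear_combination (q (k+2) + (a:ℝ)*q (k+1) + q k) * hrec k
      + (a:ℝ)*ᾱ'*(q (k+1) - α*q k + ᾱ'^(k+1)) * key1 k
      - (a:ℝ)*(q (k+1))^2 * hsum
      + (2*(a:ℝ)*q (k+1)*q k - (a:ℝ)*α*(q k)^2) * hprod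
      - (q k)^2 * hα2
  have hb : ᾱ' = -α⁻¹ := by
    field_simp
    linarith [hprod]
  have hfinal : |(a:ℝ) * ᾱ' * (ᾱ'^(k+1))^2| = (a:ℝ) / α^(2*k+3) := by
    rw [hb]
    have h1 : (a:ℝ) * (-α⁻¹) * (((-α⁻¹))^(k+1))^2 = -((a:ℝ) / α^(2*k+3)) := by
      have hsq : (((-α⁻¹:ℝ))^(k+1))^2 = ((α⁻¹:ℝ)^(k+1))^2 := by
        rw [← pow_mul, ← pow_mul, mul_comm (k+1) 2, pow_mul, pow_mul, neg_sq]
      rw [hsq, div_eq_mul_inv, ← inv_pow]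
      ring
    rw [h1, abs_neg, abs_of_nonneg (by positivity)]
  rw [hLHS, hfinal, hden, hsum]
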